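/- Let A be an associative unital ring, x, z ∈ A, and define iterated commutators by [x^(0), z] = z and [x^(i+1), z] = x·[x^(i), z] − [x^(i), z]·x. Then for all elements x, z₁, …, zₙ ∈ A and every k ≥ 0, one has x^k · z₁z₂⋯zₙ = Σ over tuples (i₁,…,i_{n+1}) of non-negative integers with i₁+⋯+i_{n+1} = k of the multinomial coefficient k!/(i₁!⋯i_{n+1}!) times [x^(i₁), z₁]·…·[x^(iₙ), zₙ]·x^{i_{n+1}}. -/

import Mathlib

/-- Iterated commutator: `adPow x 0 z = z`, `adPow x (i+1) z = x * adPow x i z - adPow x i z * x`. -/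
def adPow {A : Type*} [Ring A] (x : A) : ℕ → A → A
  | 0, z => z
  | i + 1, z => x * adPow x i z - adPow x i z * x

/-- The binomial (n = 1) case of the Leibniz-type formula. -/
lemma adPow_key {A : Type*} [Ring A] (x z : A) (k : ℕ) :
    x ^ k * z = ∑ p ∈ Finset.HasAntidiagonal.antidiagonal k,
      k.choose p.1 • (adPow x p.1 z * x ^ p.2) := by
  induction k with
  | zero => simp [adPow]
  | succ k ih =>
      have h : ∀ i : ℕ, x * adPow x i z = adPow x (i + 1) z + adPow x i z * x := by
        intro i; simp [adPow]
      rw [pow_succ', mul_assoc, ih, Finset.mul_sum]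
      have step : ∀ p ∈ Finset.HasAntidiagonal.antidiagonal k,
          x * (k.choose p.1 • (adPow x p.1 z * x ^ p.2)) =
            k.choose p.1 • (adPow x (p.1 + 1) z * x ^ p.2)
              + k.choose p.1 • (adPow x p.1 z * x ^ (p.2 + 1)) := by
        intro p _
        rw [mul_smul_comm, ← mul_assoc, h p.1, add_mul, smul_add, mul_assoc,
          ← pow_succ']
      rw [Finset.sum_congr rfl step, Finset.sum_add_distrib]
      rw [Finset.Nat.sum_antidiagonal_succ
        (f := fun p => (k+1).choose p.1 • (adPow x p.1 z * x ^ p.2))]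
      have pascal : ∀ p ∈ Finset.HasAntidiagonal.antidiagonal k,
          (k+1).choose (p.1+1) • (adPow x (p.1+1) z * x ^ p.2) =
            k.choose p.1 • (adPow x (p.1+1) z * x ^ p.2)
              + k.choose (p.1+1) • (adPow x (p.1+1) z * x ^ p.2) := by
        intro p _
        rw [Nat.choose_succ_succ, add_smul]
      rw [Finset.sum_congr rfl pascal, Finset.sum_add_distrib]
      have hS2 : ∑ p ∈ Finset.HasAntidiagonal.antidiagonal k,
            k.choose p.1 • (adPow x p.1 z * x ^ (p.2+1)) =
          adPow x 0 z * x ^ (k+1)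
            + ∑ p ∈ Finset.HasAntidiagonal.antidiagonal k,
                k.choose (p.1+1) • (adPow x (p.1+1) z * x ^ p.2) := by
        have e : ∑ p ∈ Finset.HasAntidiagonal.antidiagonal (k+1),
              k.choose p.1 • (adPow x p.1 z * x ^ p.2) =
            ∑ p ∈ Finset.HasAntidiagonal.antidiagonal k,
              k.choose p.1 • (adPow x p.1 z * x ^ (p.2+1)) := by
          rw [Finset.Nat.sum_antidiagonal_succ'
            (f := fun p => k.choose p.1 • (adPow x p.1 z * x ^ p.2))]
          simp [Nat.choose_succ_self]
        rw [← e, Finset.Nat.sum_antidiagonal_succ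
          (f := fun p => k.choose p.1 • (adPow x p.1 z * x ^ p.2))]
        simp
      rw [hS2]
      simp only [Nat.choose_zero_right, one_smul]
      abel

lemma multinomial_cons_univ (n i : ℕ) (g : Fin n → ℕ) :
    Nat.multinomial Finset.univ (Fin.cons i g : Fin (n+1) → ℕ) =
      (i + ∑ j, g j).choose i * Nat.multinomial Finset.univ g := by
  have hs : ∑ j, (Fin.cons i g : Fin (n+1) → ℕ) j = i + ∑ j, g j := by
    rw [Fin.sum_univ_succ]; simp
  have hp : ∏ j, Nat.factorial ((Fin.cons i g : Fin (n+1) → ℕ) j) =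
      Nat.factorial i * ∏ j, Nat.factorial (g j) := by
    rw [Fin.prod_univ_succ]; simp
  have hfact : Nat.factorial (i + ∑ j, g j) =
      ((i + ∑ j, g j).choose i * Nat.multinomial Finset.univ g) *
        (Nat.factorial i * ∏ j, Nat.factorial (g j)) := by
    have h1 := Nat.add_choose_mul_factorial_mul_factorial i (∑ j, g j)
    have h2 := Nat.multinomial_spec Finset.univ g
    rw [Nat.choose_symm_add]
    calc Nat.factorial (i + ∑ j, g j)
        = (i + ∑ j, g j).choose (∑ j, g j) * Nat.factorial i *
            Nat.factorial (∑ j, g j) := h1.symm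
      _ = (i + ∑ j, g j).choose (∑ j, g j) * Nat.factorial i *
            ((∏ j, Nat.factorial (g j)) * Nat.multinomial Finset.univ g) := by rw [h2]
      _ = _ := by ring
  rw [Nat.multinomial, hs, hp, hfact, Nat.mul_div_cancel]
  positivity

lemma sum_antidiagonalTuple_succ {M : Type*} [AddCommMonoid M] (n k : ℕ)
    (F : (Fin (n+1) → ℕ) → M) :
    ∑ f ∈ Finset.Nat.antidiagonalTuple (n+1) k, F f =
      ∑ p ∈ Finset.HasAntidiagonal.antidiagonal k, ∑ g ∈ Finset.Nat.antidiagonalTuple n p.2,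
        F (Fin.cons p.1 g) := by
  rw [Finset.sum_sigma']
  refine Finset.sum_nbij'
    (i := fun f => (⟨(f 0, ∑ j, f (Fin.succ j)), Fin.tail f⟩ :
        (_ : ℕ × ℕ) × (Fin n → ℕ)))
    (j := fun q => Fin.cons q.1.1 q.2) ?_ ?_ ?_ ?_ ?_
  · intro f hf
    simp only [Finset.Nat.mem_antidiagonalTuple] at hf
    simp only [Finset.mem_sigma, Finset.HasAntidiagonal.mem_antidiagonal,
      Finset.Nat.mem_antidiagonalTuple]
    exact ⟨by rw [← hf, Fin.sum_univ_succ], rfl⟩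
  · rintro ⟨p, g⟩ hm
    simp only [Finset.mem_sigma, Finset.HasAntidiagonal.mem_antidiagonal,
      Finset.Nat.mem_antidiagonalTuple] at hm
    simp only [Finset.Nat.mem_antidiagonalTuple]
    rw [Fin.sum_univ_succ]
    simp [hm.2, hm.1]
  · intro f hf
    simp [Fin.cons_self_tail]
  · rintro ⟨p, g⟩ hm
    simp only [Finset.mem_sigma, Finset.HasAntidiagonal.mem_antidiagonal,
      Finset.Nat.mem_antidiagonalTuple] at hm
    simp [Fin.tail_cons, hm.2]
  · intro f hf
    simp [Fin.cons_self_tail]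

/-- The Leibniz-type formula, stated with `ℕ`-scalar multiplication. -/
lemma statement0_nsmul {A : Type*} [Ring A] (x : A) (k n : ℕ) (z : Fin n → A) :
    x ^ k * (List.ofFn z).prod =
      ∑ f ∈ Finset.Nat.antidiagonalTuple (n + 1) k,
        Nat.multinomial Finset.univ f •
          ((List.ofFn fun j : Fin n => adPow x (f j.castSucc) (z j)).prod *
            x ^ f (Fin.last n)) := by
  induction n generalizing k with
  | zero =>
      simp [Finset.Nat.antidiagonalTuple_one]
  | succ n ih =>
      rw [List.ofFn_succ, List.prod_cons, ← mul_assoc, adPow_key x (z 0) k,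
        Finset.sum_mul, sum_antidiagonalTuple_succ]
      refine Finset.sum_congr rfl fun p hp => ?_
      have hk : p.1 + p.2 = k := Finset.HasAntidiagonal.mem_antidiagonal.mp hp
      rw [smul_mul_assoc, mul_assoc, ih p.2 (fun i => z i.succ), Finset.mul_sum,
        Finset.smul_sum]
      refine Finset.sum_congr rfl fun g hg => ?_
      have hg' : ∑ i, g i = p.2 := Finset.Nat.mem_antidiagonalTuple.mp hg
      rw [multinomial_cons_univ, hg', hk]
      simp only [List.ofFn_succ, Fin.castSucc_zero, Fin.cons_zero, List.prod_cons,
        ← Fin.succ_castSucc, Fin.cons_succ, ← Fin.succ_last,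
        mul_smul_comm, smul_smul, mul_assoc]

/-- For all `x, z₁, …, zₙ` in an associative unital ring and `k ≥ 0`:
`x^k · z₁⋯zₙ = Σ_{i₁+⋯+i_{n+1}=k} (k!/(i₁!⋯i_{n+1}!)) [x^(i₁),z₁]⋯[x^(iₙ),zₙ] x^{i_{n+1}}`. -/
theorem statement0 {A : Type*} [Ring A] (x : A) (k n : ℕ) (z : Fin n → A) :
    x ^ k * (List.ofFn z).prod =
      ∑ f ∈ Finset.Nat.antidiagonalTuple (n + 1) k,
        (Nat.multinomial Finset.univ f : A) *
          ((List.ofFn fun j : Fin n => adPow x (f j.castSucc) (z j)).prod *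
            x ^ f (Fin.last n)) := by
  rw [statement0_nsmul]
  simp [nsmul_eq_mul]
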